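/- With γ = (1/4)/(a+1/4+b) and Z, U as in the measurement error model, the predictor λ^(P) = ((1-γ)Z + γU)² - γ(b - a) is unbiased for λ = θ²: E[λ^(P) - θ²] = 0. -/

import Mathlib

open MeasureTheory ProbabilityTheory Real Filter
open scoped NNReal ENNReal

lemma int_x_exp {b : ℝ} (hb : 0 < b) : ∫ x : ℝ, x * Real.exp (-b * x ^ 2) = 0 := by
  have hderiv : ∀ x : ℝ, HasDerivAt (fun y : ℝ => (-(2*b))⁻¹ * Real.exp (-b * y ^ 2))
      (x * Real.exp (-b * x ^ 2)) x := by
    intro x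
    have h1 : HasDerivAt (fun y : ℝ => -b * y ^ 2) (-b * (2 * x)) x := by
      simpa using ((hasDerivAt_pow 2 x).const_mul (-b))
    have h2 := (h1.exp).const_mul (-(2*b))⁻¹
    refine h2.congr_deriv ?_
    field_simp
  have hint : Integrable (fun x : ℝ => x * Real.exp (-b * x ^ 2)) :=
    integrable_mul_exp_neg_mul_sq hb
  have hf : Integrable (fun y : ℝ => (-(2*b))⁻¹ * Real.exp (-b * y ^ 2)) :=
    (integrable_exp_neg_mul_sq hb).const_mul _
  exact integral_eq_zero_of_hasDerivAt_of_integrable hderiv hint hf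

lemma int_sq_exp_integrable {b : ℝ} (hb : 0 < b) :
    Integrable (fun x : ℝ => x ^ 2 * Real.exp (-b * x ^ 2)) := by
  have := integrable_rpow_mul_exp_neg_mul_sq hb (s := 2) (by norm_num)
  have heq : (fun x : ℝ => x ^ (2:ℝ) * Real.exp (-b * x ^ 2))
      = fun x : ℝ => x ^ 2 * Real.exp (-b * x ^ 2) := by
    ext x
    rw [show (2:ℝ) = ((2:ℕ):ℝ) by norm_num, Real.rpow_natCast]
  rwa [heq] at this

lemma int_x2_exp {b : ℝ} (hb : 0 < b) :
    ∫ x : ℝ, x ^ 2 * Real.exp (-b * x ^ 2) = (2*b)⁻¹ * Real.sqrt (π / b) := by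
  have hderiv : ∀ x : ℝ, HasDerivAt (fun y : ℝ => y * Real.exp (-b * y ^ 2))
      (Real.exp (-b * x ^ 2) + (-(2*b)) * (x ^ 2 * Real.exp (-b * x ^ 2))) x := by
    intro x
    have h1 : HasDerivAt (fun y : ℝ => -b * y ^ 2) (-b * (2 * x)) x := by
      simpa using ((hasDerivAt_pow 2 x).const_mul (-b))
    have h2 := (hasDerivAt_id x).mul h1.exp
    refine h2.congr_deriv ?_
    simp
    ring
  have hint1 : Integrable (fun x : ℝ => Real.exp (-b * x ^ 2)) := integrable_exp_neg_mul_sq hb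
  have hint2 := int_sq_exp_integrable hb
  have hf : Integrable (fun y : ℝ => y * Real.exp (-b * y ^ 2)) :=
    integrable_mul_exp_neg_mul_sq hb
  have h0 := integral_eq_zero_of_hasDerivAt_of_integrable hderiv
    (hint1.add (hint2.const_mul _)) hf
  rw [integral_add hint1 (hint2.const_mul _), integral_const_mul, integral_gaussian] at h0
  have hbne : (2*b) ≠ 0 := by positivity
  field_simp at h0 ⊢
  linarith

lemma gauss_pdf_eq (V : ℝ≥0) (hV : V ≠ 0) :
    gaussianPDFReal 0 V = fun x => (√(2 * π * V))⁻¹ * Real.exp (-(2*(V:ℝ))⁻¹ * x ^ 2) := by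
  ext x
  rw [gaussianPDFReal]
  congr 2
  rw [sub_zero, neg_div, neg_mul, div_eq_mul_inv, mul_comm]

lemma integral_gaussianReal_eq (V : ℝ≥0) (hV : V ≠ 0) (g : ℝ → ℝ) :
    ∫ x, g x ∂(gaussianReal 0 V) = ∫ x, gaussianPDFReal 0 V x * g x := by
  rw [gaussianReal_of_var_ne_zero 0 hV,
    show gaussianPDF 0 V = fun x => ((Real.toNNReal (gaussianPDFReal 0 V x) : ℝ≥0) : ℝ≥0∞) from rfl,
    integral_withDensity_eq_integral_smul (measurable_gaussianPDFReal 0 V).real_toNNReal g]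
  congr 1
  ext x
  simp [NNReal.smul_def, Real.coe_toNNReal _ (gaussianPDFReal_nonneg 0 V x)]

lemma integrable_gaussianReal (V : ℝ≥0) (hV : V ≠ 0) {g : ℝ → ℝ} (hg : Measurable g)
    (h : Integrable (fun x => gaussianPDFReal 0 V x * g x)) : Integrable g (gaussianReal 0 V) := by
  rw [gaussianReal_of_var_ne_zero 0 hV,
    show gaussianPDF 0 V = fun x => ((Real.toNNReal (gaussianPDFReal 0 V x) : ℝ≥0) : ℝ≥0∞) from rfl,
    integrable_withDensity_iff_integrable_coe_smul (measurable_gaussianPDFReal 0 V).real_toNNReal]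
  refine h.congr (ae_of_all _ fun x => ?_)
  simp [NNReal.smul_def, Real.coe_toNNReal _ (gaussianPDFReal_nonneg 0 V x)]

lemma integrable_dirac_real {f : ℝ → ℝ} (hf : Measurable f) (x : ℝ) :
    Integrable f (Measure.dirac x) := by
  refine ⟨hf.aestronglyMeasurable, ?_⟩
  simp [HasFiniteIntegral, lintegral_dirac]

lemma integrable_id_gauss (V : ℝ≥0) : Integrable (fun x : ℝ => x) (gaussianReal 0 V) := by
  by_cases hV : V = 0
  · simp only [hV, gaussianReal_zero_var]
    exact integrable_dirac_real measurable_id 0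
  · have hVpos : (0:ℝ) < V := by exact_mod_cast lt_of_le_of_ne zero_le (Ne.symm hV)
    have hb : (0:ℝ) < (2*(V:ℝ))⁻¹ := by positivity
    refine integrable_gaussianReal V hV measurable_id ?_
    rw [gauss_pdf_eq V hV]
    have : (fun x : ℝ => (√(2 * π * V))⁻¹ * Real.exp (-(2*(V:ℝ))⁻¹ * x ^ 2) * x)
        = fun x : ℝ => (√(2 * π * V))⁻¹ * (x * Real.exp (-(2*(V:ℝ))⁻¹ * x ^ 2)) := by
      ext x; ring
    rw [this]
    exact (integrable_mul_exp_neg_mul_sq hb).const_mul _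

lemma integrable_sq_gauss (V : ℝ≥0) : Integrable (fun x : ℝ => x ^ 2) (gaussianReal 0 V) := by
  by_cases hV : V = 0
  · simp only [hV, gaussianReal_zero_var]
    exact integrable_dirac_real (by measurability) 0
  · have hVpos : (0:ℝ) < V := by exact_mod_cast lt_of_le_of_ne zero_le (Ne.symm hV)
    have hb : (0:ℝ) < (2*(V:ℝ))⁻¹ := by positivity
    refine integrable_gaussianReal V hV (by measurability) ?_
    rw [gauss_pdf_eq V hV]
    have : (fun x : ℝ => (√(2 * π * V))⁻¹ * Real.exp (-(2*(V:ℝ))⁻¹ * x ^ 2) * x ^ 2)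
        = fun x : ℝ => (√(2 * π * V))⁻¹ * (x ^ 2 * Real.exp (-(2*(V:ℝ))⁻¹ * x ^ 2)) := by
      ext x; ring
    rw [this]
    exact (int_sq_exp_integrable hb).const_mul _

lemma int_id_gauss (V : ℝ≥0) : ∫ x, x ∂(gaussianReal 0 V) = 0 := by
  by_cases hV : V = 0
  · simp [hV]
  · have hb : (0:ℝ) < (2*(V:ℝ))⁻¹ := by
      have : (0:ℝ) < V := by positivity
      positivity
    rw [integral_gaussianReal_eq V hV, gauss_pdf_eq V hV]
    have : (fun x : ℝ => (√(2 * π * V))⁻¹ * Real.exp (-(2*(V:ℝ))⁻¹ * x ^ 2) * x)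
        = fun x : ℝ => (√(2 * π * V))⁻¹ * (x * Real.exp (-(2*(V:ℝ))⁻¹ * x ^ 2)) := by
      ext x; ring
    rw [this, integral_const_mul, int_x_exp hb, mul_zero]

lemma int_sq_gauss (V : ℝ≥0) : ∫ x, x ^ 2 ∂(gaussianReal 0 V) = V := by
  by_cases hV : V = 0
  · simp [hV]
  · have hVpos : (0:ℝ) < V := by exact_mod_cast lt_of_le_of_ne zero_le (Ne.symm hV)
    have hb : (0:ℝ) < (2*(V:ℝ))⁻¹ := by positivity
    rw [integral_gaussianReal_eq V hV, gauss_pdf_eq V hV]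
    have : (fun x : ℝ => (√(2 * π * V))⁻¹ * Real.exp (-(2*(V:ℝ))⁻¹ * x ^ 2) * x ^ 2)
        = fun x : ℝ => (√(2 * π * V))⁻¹ * (x ^ 2 * Real.exp (-(2*(V:ℝ))⁻¹ * x ^ 2)) := by
      ext x; ring
    rw [this, integral_const_mul, int_x2_exp hb]
    have h1 : (2 * (2*(V:ℝ))⁻¹)⁻¹ = V := by field_simp
    have h2 : π / (2*(V:ℝ))⁻¹ = 2 * π * V := by field_simp
    rw [h1, h2]
    have h3 : (0:ℝ) < 2 * π * V := by positivity
    have h4 : √(2 * π * V) ≠ 0 := by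
      rw [Real.sqrt_ne_zero' ]; exact h3
    field_simp

lemma gauss_moments {Ω : Type*} [MeasurableSpace Ω] {P : Measure Ω} [IsProbabilityMeasure P]
    {X : Ω → ℝ} {V : ℝ≥0} (hX : P.map X = gaussianReal 0 V) :
    AEMeasurable X P ∧ Integrable X P ∧ Integrable (fun ω => X ω ^ 2) P ∧
      (∫ ω, X ω ∂P) = 0 ∧ (∫ ω, X ω ^ 2 ∂P) = V := by
  have hm : AEMeasurable X P := by
    refine aemeasurable_of_map_neZero ?_
    rw [hX]
    infer_instance
  have h1 : Integrable (fun x : ℝ => x) (P.map X) := hX ▸ integrable_id_gauss V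
  have h2 : Integrable (fun x : ℝ => x ^ 2) (P.map X) := hX ▸ integrable_sq_gauss V
  have i1 : Integrable X P :=
    (integrable_map_measure measurable_id.aestronglyMeasurable hm).mp h1
  have i2 : Integrable (fun ω => X ω ^ 2) P :=
    (integrable_map_measure (by measurability) hm).mp h2
  have e1 : (∫ ω, X ω ∂P) = 0 :=
    ((integral_map (f := fun x : ℝ => x) hm measurable_id.aestronglyMeasurable).symm).trans
      (by rw [hX]; exact int_id_gauss V)
  have e2 : (∫ ω, X ω ^ 2 ∂P) = V :=
    ((integral_map (f := fun x : ℝ => x ^ 2) hm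
      ((measurable_id.pow_const 2).aestronglyMeasurable)).symm).trans
      (by rw [hX]; exact int_sq_gauss V)
  exact ⟨hm, i1, i2, e1, e2⟩

theorem stmt_18 {Ω : Type*} [MeasurableSpace Ω] (P : Measure Ω) [IsProbabilityMeasure P]
    (v e Δ : Ω → ℝ) (μ a b : ℝ) (ha : 0 ≤ a) (hb : 0 ≤ b)
    (hv : P.map v = gaussianReal 0 a.toNNReal)
    (he : P.map e = gaussianReal 0 (Real.toNNReal (1 / 4)))
    (hΔ : P.map Δ = gaussianReal 0 b.toNNReal)
    (hindep : iIndepFun ![v, e, Δ] P)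
    (γ : ℝ) (hγ : γ = (1 / 4) / (a + 1 / 4 + b)) :
    ((∫ ω, ((1 - γ) * ((μ + v ω) + e ω) + γ * (μ + Δ ω)) ^ 2 ∂P)
        - ∫ ω, (μ + v ω) ^ 2 ∂P = γ * (b - a)) ∧
      ∫ ω, (((1 - γ) * ((μ + v ω) + e ω) + γ * (μ + Δ ω)) ^ 2 - γ * (b - a)
          - (μ + v ω) ^ 2) ∂P = 0 := by
  obtain ⟨hvm, iv, iv2, Ev, Ev2⟩ := gauss_moments hv
  obtain ⟨hem, ie, ie2, Ee, Ee2⟩ := gauss_moments he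
  obtain ⟨hΔm, iΔ, iΔ2, EΔ, EΔ2⟩ := gauss_moments hΔ
  rw [Real.coe_toNNReal a ha] at Ev2
  rw [Real.coe_toNNReal b hb] at EΔ2
  rw [Real.coe_toNNReal (1/4) (by norm_num)] at Ee2
  -- independence of pairs
  have hve : IndepFun v e P := by simpa using hindep.indepFun (show (0:Fin 3) ≠ 1 by decide)
  have hvΔ : IndepFun v Δ P := by simpa using hindep.indepFun (show (0:Fin 3) ≠ 2 by decide)
  have heΔ : IndepFun e Δ P := by simpa using hindep.indepFun (show (1:Fin 3) ≠ 2 by decide)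
  have ive : Integrable (fun ω => v ω * e ω) P := hve.integrable_mul iv ie
  have ivΔ : Integrable (fun ω => v ω * Δ ω) P := hvΔ.integrable_mul iv iΔ
  have ieΔ : Integrable (fun ω => e ω * Δ ω) P := heΔ.integrable_mul ie iΔ
  have Eve : (∫ ω, v ω * e ω ∂P) = 0 := by
    have h : ∫ ω, v ω * e ω ∂P = (∫ ω, v ω ∂P) * ∫ ω, e ω ∂P :=
      hve.integral_mul_eq_mul_integral iv.aestronglyMeasurable ie.aestronglyMeasurable
    rw [h, Ev, zero_mul]
  have EvΔ : (∫ ω, v ω * Δ ω ∂P) = 0 := by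
    have h : ∫ ω, v ω * Δ ω ∂P = (∫ ω, v ω ∂P) * ∫ ω, Δ ω ∂P :=
      hvΔ.integral_mul_eq_mul_integral iv.aestronglyMeasurable iΔ.aestronglyMeasurable
    rw [h, Ev, zero_mul]
  have EeΔ : (∫ ω, e ω * Δ ω ∂P) = 0 := by
    have h : ∫ ω, e ω * Δ ω ∂P = (∫ ω, e ω ∂P) * ∫ ω, Δ ω ∂P :=
      heΔ.integral_mul_eq_mul_integral ie.aestronglyMeasurable iΔ.aestronglyMeasurable
    rw [h, Ee, zero_mul]
  -- expansion of the predictor squared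
  have hexp : (fun ω => ((1 - γ) * ((μ + v ω) + e ω) + γ * (μ + Δ ω)) ^ 2)
      = fun ω => μ ^ 2 + ((1-γ)^2 * v ω ^ 2 + ((1-γ)^2 * e ω ^ 2 + (γ^2 * Δ ω ^ 2 + (2*μ*(1-γ) * v ω + (2*μ*(1-γ) * e ω + (2*μ*γ * Δ ω + (2*(1-γ)^2 * (v ω * e ω) + (2*(1-γ)*γ * (v ω * Δ ω) + (2*(1-γ)*γ * (e ω * Δ ω)))))))))) := by
    funext ω; ring
  have hexp2 : (fun ω => (μ + v ω) ^ 2)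
      = fun ω => μ ^ 2 + (2*μ * v ω + (v ω ^ 2)) := by
    funext ω; ring
  have j1 := iv2.const_mul ((1-γ)^2)
  have j2 := ie2.const_mul ((1-γ)^2)
  have j3 := iΔ2.const_mul (γ^2)
  have j4 := iv.const_mul (2*μ*(1-γ))
  have j5 := ie.const_mul (2*μ*(1-γ))
  have j6 := iΔ.const_mul (2*μ*γ)
  have j7 := ive.const_mul (2*(1-γ)^2)
  have j8 := ivΔ.const_mul (2*(1-γ)*γ)
  have j9 := ieΔ.const_mul (2*(1-γ)*γ)
  have k8 : Integrable (fun ω => 2*(1-γ)*γ * (v ω * Δ ω) + (2*(1-γ)*γ * (e ω * Δ ω))) P := j8.add j9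
  have k7 : Integrable (fun ω => 2*(1-γ)^2 * (v ω * e ω) + (2*(1-γ)*γ * (v ω * Δ ω) + (2*(1-γ)*γ * (e ω * Δ ω)))) P := j7.add k8
  have k6 : Integrable (fun ω => 2*μ*γ * Δ ω + (2*(1-γ)^2 * (v ω * e ω) + (2*(1-γ)*γ * (v ω * Δ ω) + (2*(1-γ)*γ * (e ω * Δ ω))))) P := j6.add k7
  have k5 : Integrable (fun ω => 2*μ*(1-γ) * e ω + (2*μ*γ * Δ ω + (2*(1-γ)^2 * (v ω * e ω) + (2*(1-γ)*γ * (v ω * Δ ω) + (2*(1-γ)*γ * (e ω * Δ ω)))))) P := j5.add k6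
  have k4 : Integrable (fun ω => 2*μ*(1-γ) * v ω + (2*μ*(1-γ) * e ω + (2*μ*γ * Δ ω + (2*(1-γ)^2 * (v ω * e ω) + (2*(1-γ)*γ * (v ω * Δ ω) + (2*(1-γ)*γ * (e ω * Δ ω))))))) P := j4.add k5
  have k3 : Integrable (fun ω => γ^2 * Δ ω ^ 2 + (2*μ*(1-γ) * v ω + (2*μ*(1-γ) * e ω + (2*μ*γ * Δ ω + (2*(1-γ)^2 * (v ω * e ω) + (2*(1-γ)*γ * (v ω * Δ ω) + (2*(1-γ)*γ * (e ω * Δ ω)))))))) P := j3.add k4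
  have k2 : Integrable (fun ω => (1-γ)^2 * e ω ^ 2 + (γ^2 * Δ ω ^ 2 + (2*μ*(1-γ) * v ω + (2*μ*(1-γ) * e ω + (2*μ*γ * Δ ω + (2*(1-γ)^2 * (v ω * e ω) + (2*(1-γ)*γ * (v ω * Δ ω) + (2*(1-γ)*γ * (e ω * Δ ω))))))))) P := j2.add k3
  have k1 : Integrable (fun ω => (1-γ)^2 * v ω ^ 2 + ((1-γ)^2 * e ω ^ 2 + (γ^2 * Δ ω ^ 2 + (2*μ*(1-γ) * v ω + (2*μ*(1-γ) * e ω + (2*μ*γ * Δ ω + (2*(1-γ)^2 * (v ω * e ω) + (2*(1-γ)*γ * (v ω * Δ ω) + (2*(1-γ)*γ * (e ω * Δ ω)))))))))) P := j1.add k2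
  have k0 : Integrable (fun ω => μ ^ 2 + ((1-γ)^2 * v ω ^ 2 + ((1-γ)^2 * e ω ^ 2 + (γ^2 * Δ ω ^ 2 + (2*μ*(1-γ) * v ω + (2*μ*(1-γ) * e ω + (2*μ*γ * Δ ω + (2*(1-γ)^2 * (v ω * e ω) + (2*(1-γ)*γ * (v ω * Δ ω) + (2*(1-γ)*γ * (e ω * Δ ω))))))))))) P := (integrable_const _).add k1
  have s0 : ∫ ω, (μ ^ 2 + ((1-γ)^2 * v ω ^ 2 + ((1-γ)^2 * e ω ^ 2 + (γ^2 * Δ ω ^ 2 + (2*μ*(1-γ) * v ω + (2*μ*(1-γ) * e ω + (2*μ*γ * Δ ω + (2*(1-γ)^2 * (v ω * e ω) + (2*(1-γ)*γ * (v ω * Δ ω) + (2*(1-γ)*γ * (e ω * Δ ω))))))))))) ∂P = (∫ ω, (μ ^ 2) ∂P) + ∫ ω, ((1-γ)^2 * v ω ^ 2 + ((1-γ)^2 * e ω ^ 2 + (γ^2 * Δ ω ^ 2 + (2*μ*(1-γ) * v ω + (2*μ*(1-γ) * e ω + (2*μ*γ * Δ ω + (2*(1-γ)^2 * (v ω * e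 ω) + (2*(1-γ)*γ * (v ω * Δ ω) + (2*(1-γ)*γ * (e ω * Δ ω)))))))))) ∂P := integral_add (integrable_const _) k1
  have s1 : ∫ ω, ((1-γ)^2 * v ω ^ 2 + ((1-γ)^2 * e ω ^ 2 + (γ^2 * Δ ω ^ 2 + (2*μ*(1-γ) * v ω + (2*μ*(1-γ) * e ω + (2*μ*γ * Δ ω + (2*(1-γ)^2 * (v ω * e ω) + (2*(1-γ)*γ * (v ω * Δ ω) + (2*(1-γ)*γ * (e ω * Δ ω)))))))))) ∂P = (∫ ω, ((1-γ)^2 * v ω ^ 2) ∂P) + ∫ ω, ((1-γ)^2 * e ω ^ 2 + (γ^2 * Δ ω ^ 2 + (2*μ*(1-γ) * v ω + (2*μ*(1-γ) * e ω + (2*μ*γ * Δ ω + (2*(1-γ)^2 * (v ω * e ω) + (2*(1-γ)*γ * (v ω * Δ ω) + (2*(1-γ)*γ * (e ω * Δ ω))))))))) ∂P := integral_add j1 k2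
  have s2 : ∫ ω, ((1-γ)^2 * e ω ^ 2 + (γ^2 * Δ ω ^ 2 + (2*μ*(1-γ) * v ω + (2*μ*(1-γ) * e ω + (2*μ*γ * Δ ω + (2*(1-γ)^2 * (v ω * e ω) + (2*(1-γ)*γ * (v ω * Δ ω) + (2*(1-γ)*γ * (e ω * Δ ω))))))))) ∂P = (∫ ω, ((1-γ)^2 * e ω ^ 2) ∂P) + ∫ ω, (γ^2 * Δ ω ^ 2 + (2*μ*(1-γ) * v ω + (2*μ*(1-γ) * e ω + (2*μ*γ * Δ ω + (2*(1-γ)^2 * (v ω * e ω) + (2*(1-γ)*γ * (v ω * Δ ω) + (2*(1-γ)*γ * (e ω * Δ ω)))))))) ∂P := integral_add j2 k3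
  have s3 : ∫ ω, (γ^2 * Δ ω ^ 2 + (2*μ*(1-γ) * v ω + (2*μ*(1-γ) * e ω + (2*μ*γ * Δ ω + (2*(1-γ)^2 * (v ω * e ω) + (2*(1-γ)*γ * (v ω * Δ ω) + (2*(1-γ)*γ * (e ω * Δ ω)))))))) ∂P = (∫ ω, (γ^2 * Δ ω ^ 2) ∂P) + ∫ ω, (2*μ*(1-γ) * v ω + (2*μ*(1-γ) * e ω + (2*μ*γ * Δ ω + (2*(1-γ)^2 * (v ω * e ω) + (2*(1-γ)*γ * (v ω * Δ ω) + (2*(1-γ)*γ * (e ω * Δ ω))))))) ∂P := integral_add j3 k4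
  have s4 : ∫ ω, (2*μ*(1-γ) * v ω + (2*μ*(1-γ) * e ω + (2*μ*γ * Δ ω + (2*(1-γ)^2 * (v ω * e ω) + (2*(1-γ)*γ * (v ω * Δ ω) + (2*(1-γ)*γ * (e ω * Δ ω))))))) ∂P = (∫ ω, (2*μ*(1-γ) * v ω) ∂P) + ∫ ω, (2*μ*(1-γ) * e ω + (2*μ*γ * Δ ω + (2*(1-γ)^2 * (v ω * e ω) + (2*(1-γ)*γ * (v ω * Δ ω) + (2*(1-γ)*γ * (e ω * Δ ω)))))) ∂P := integral_add j4 k5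
  have s5 : ∫ ω, (2*μ*(1-γ) * e ω + (2*μ*γ * Δ ω + (2*(1-γ)^2 * (v ω * e ω) + (2*(1-γ)*γ * (v ω * Δ ω) + (2*(1-γ)*γ * (e ω * Δ ω)))))) ∂P = (∫ ω, (2*μ*(1-γ) * e ω) ∂P) + ∫ ω, (2*μ*γ * Δ ω + (2*(1-γ)^2 * (v ω * e ω) + (2*(1-γ)*γ * (v ω * Δ ω) + (2*(1-γ)*γ * (e ω * Δ ω))))) ∂P := integral_add j5 k6
  have s6 : ∫ ω, (2*μ*γ * Δ ω + (2*(1-γ)^2 * (v ω * e ω) + (2*(1-γ)*γ * (v ω * Δ ω) + (2*(1-γ)*γ * (e ω * Δ ω))))) ∂P = (∫ ω, (2*μ*γ * Δ ω) ∂P) + ∫ ω, (2*(1-γ)^2 * (v ω * e ω) + (2*(1-γ)*γ * (v ω * Δ ω) + (2*(1-γ)*γ * (e ω * Δ ω)))) ∂P := integral_add j6 k7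
  have s7 : ∫ ω, (2*(1-γ)^2 * (v ω * e ω) + (2*(1-γ)*γ * (v ω * Δ ω) + (2*(1-γ)*γ * (e ω * Δ ω)))) ∂P = (∫ ω, (2*(1-γ)^2 * (v ω * e ω)) ∂P) + ∫ ω, (2*(1-γ)*γ * (v ω * Δ ω) + (2*(1-γ)*γ * (e ω * Δ ω))) ∂P := integral_add j7 k8
  have s8 : ∫ ω, (2*(1-γ)*γ * (v ω * Δ ω) + (2*(1-γ)*γ * (e ω * Δ ω))) ∂P = (∫ ω, (2*(1-γ)*γ * (v ω * Δ ω)) ∂P) + ∫ ω, (2*(1-γ)*γ * (e ω * Δ ω)) ∂P := integral_add j8 j9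
  have E1 : (∫ ω, ((1 - γ) * ((μ + v ω) + e ω) + γ * (μ + Δ ω)) ^ 2 ∂P)
      = μ ^ 2 + ((1-γ)^2 * a + ((1-γ)^2 * (1/4) + γ^2 * b)) := by
    rw [hexp, s0, s1, s2, s3, s4, s5, s6, s7, s8]
    simp only [integral_const_mul, Ev, Ee, EΔ, Ev2, Ee2, EΔ2, Eve, EvΔ, EeΔ, integral_const, probReal_univ,
      measure_univ, ENNReal.toReal_one, smul_eq_mul, one_mul, mul_zero, add_zero, zero_add]
  have m1 : Integrable (fun ω => 2*μ * v ω + (v ω ^ 2)) P := (iv.const_mul (2*μ)).add iv2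
  have u0 : ∫ ω, (μ ^ 2 + (2*μ * v ω + (v ω ^ 2))) ∂P
      = (∫ ω, (μ ^ 2 : ℝ) ∂P) + ∫ ω, (2*μ * v ω + (v ω ^ 2)) ∂P := integral_add (integrable_const _) m1
  have u1 : ∫ ω, (2*μ * v ω + (v ω ^ 2)) ∂P
      = (∫ ω, 2*μ * v ω ∂P) + ∫ ω, v ω ^ 2 ∂P := integral_add (iv.const_mul (2*μ)) iv2
  have E2 : (∫ ω, (μ + v ω) ^ 2 ∂P) = μ ^ 2 + a := by
    rw [hexp2, u0, u1]
    simp only [integral_const_mul, Ev, Ev2, integral_const, probReal_univ, measure_univ, ENNReal.toReal_one,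
      smul_eq_mul, one_mul, mul_zero, add_zero, zero_add]
  have hS : (0:ℝ) < a + 1/4 + b := by linarith
  have key : (∫ ω, ((1 - γ) * ((μ + v ω) + e ω) + γ * (μ + Δ ω)) ^ 2 ∂P)
      - (∫ ω, (μ + v ω) ^ 2 ∂P) = γ * (b - a) := by
    rw [E1, E2, hγ]
    field_simp
    ring
  refine ⟨key, ?_⟩
  have iF : Integrable (fun ω => ((1 - γ) * ((μ + v ω) + e ω) + γ * (μ + Δ ω)) ^ 2) P := by
    rw [hexp]
    exact k0
  have iG : Integrable (fun ω => (μ + v ω) ^ 2) P := by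
    rw [hexp2]
    exact (integrable_const _).add m1
  have step1 : ∫ ω, (((1 - γ) * ((μ + v ω) + e ω) + γ * (μ + Δ ω)) ^ 2 - γ * (b - a)
        - (μ + v ω) ^ 2) ∂P
      = (∫ ω, (((1 - γ) * ((μ + v ω) + e ω) + γ * (μ + Δ ω)) ^ 2 - γ * (b - a)) ∂P)
        - ∫ ω, (μ + v ω) ^ 2 ∂P :=
    integral_sub (iF.sub (integrable_const _)) iG
  have step2 : ∫ ω, (((1 - γ) * ((μ + v ω) + e ω) + γ * (μ + Δ ω)) ^ 2 - γ * (b - a)) ∂P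
      = (∫ ω, ((1 - γ) * ((μ + v ω) + e ω) + γ * (μ + Δ ω)) ^ 2 ∂P)
        - ∫ ω, (γ * (b - a) : ℝ) ∂P :=
    integral_sub iF (integrable_const _)
  rw [step1, step2, integral_const]
  simp only [probReal_univ, measure_univ, ENNReal.toReal_one, smul_eq_mul, one_mul]
  linarith [key]
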